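/- Let U = (M₀, M₁, M₂, M₃) with M₀ = ρ, M₁ = ρu, M₂ = ρu² + p, M₃ = ρu³ + 3pu + q, ρ > 0, p > 0, and let F(U) = (M₁, M₂, M₃, M̄₄) with M̄₄ = ρu⁴ + 6pu² + 4uq + q²/p + p²/ρ. Then the Jacobian matrix ∂F/∂U has characteristic polynomial with exactly two distinct real roots μ₁ and μ₂ (the bi-delta abscissas), each of algebraic multiplicity 2, and the vector (1, μᵢ, μᵢ², μᵢ³) is a right eigenvector for the eigenvalue μᵢ. -/

import Mathlib

open Polynomial

/-- The bi-delta moment-closure flux `F(U) = (M₁, M₂, M₃, M̄₄)` written as a function of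
the conserved moments `U = (M₀, M₁, M₂, M₃)`, with the primitive variables recovered by
`ρ = M₀`, `u = M₁/M₀`, `p = M₂ - ρu²`, `q = M₃ - ρu³ - 3pu`. -/
noncomputable def biDeltaFlux (V : Fin 4 → ℝ) : Fin 4 → ℝ :=
  let ρ := V 0
  let u := V 1 / V 0
  let p := V 2 - ρ * u^2
  let q := V 3 - ρ * u^3 - 3 * p * u
  ![V 1, V 2, V 3, ρ*u^4 + 6*p*u^2 + 4*u*q + q^2/p + p^2/ρ]

private theorem keyDeriv (ρ u p q : ℝ) (hρ : ρ ≠ 0) (hp : p ≠ 0)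
    (A B C D : ℝ → ℝ) (A' B' C' D' t : ℝ)
    (hA : HasDerivAt A A' t) (hB : HasDerivAt B B' t)
    (hC : HasDerivAt C C' t) (hD : HasDerivAt D D' t)
    (vA : A t = ρ) (vB : B t = ρ*u) (vC : C t = ρ*u^2 + p) (vD : D t = ρ*u^3 + 3*p*u + q) :
    HasDerivAt (fun s => A s * (B s / A s)^4 + 6*(C s - A s * (B s / A s)^2)*(B s / A s)^2
      + 4*(B s / A s)*(D s - A s*(B s / A s)^3 - 3*(C s - A s*(B s / A s)^2)*(B s / A s))
      + (D s - A s*(B s / A s)^3 - 3*(C s - A s*(B s / A s)^2)*(B s / A s))^2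
          / (C s - A s*(B s / A s)^2)
      + (C s - A s*(B s / A s)^2)^2 / A s)
      ((-(u^2 + u*q/p - p/ρ)^2) * A'
        + (2*(2*u + q/p)*(u^2 + u*q/p - p/ρ)) * B'
        + (-((2*u + q/p)^2 + 2*(u^2 + u*q/p - p/ρ))) * C'
        + (2*(2*u + q/p)) * D') t := by
  have h0A : A t ≠ 0 := by rw [vA]; exact hρ
  have hBA : B t / A t = u := by rw [vA, vB]; field_simp
  have hPv : C t - A t * (B t / A t)^2 = p := by rw [hBA, vA, vC]; ring
  have hPne : C t - A t * (B t / A t)^2 ≠ 0 := by rw [hPv]; exact hp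
  have hu := hB.div hA h0A
  have hP := hC.sub (hA.mul (hu.pow 2))
  have hQ := (hD.sub (hA.mul (hu.pow 3))).sub ((hP.const_mul 3).mul hu)
  have hG := ((((hA.mul (hu.pow 4)).add ((hP.const_mul 6).mul (hu.pow 2))).add
      ((hu.const_mul 4).mul hQ)).add ((hQ.pow 2).div hP hPne)).add ((hP.pow 2).div hA h0A)
  refine hG.congr_deriv ?_
  have hPv2 : C t - A t * u^2 = p := by rw [← hBA]; exact hPv
  simp only [Pi.div_apply, Pi.pow_apply, Pi.sub_apply, Pi.mul_apply, hBA, hPv2]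
  simp only [hBA, hPv, vA, vB, vC, vD]
  push_cast
  field_simp
  ring

private theorem companion_charpoly (μ₁ μ₂ : ℝ) :
    (Matrix.charpoly (![![0,1,0,0],![0,0,1,0],![0,0,0,1],
      ![-(μ₁*μ₂)^2, 2*(μ₁+μ₂)*(μ₁*μ₂), -((μ₁+μ₂)^2 + 2*(μ₁*μ₂)), 2*(μ₁+μ₂)]] :
      Matrix (Fin 4) (Fin 4) ℝ)) = (Polynomial.X - Polynomial.C μ₁)^2 * (Polynomial.X - Polynomial.C μ₂)^2 := by
  change Matrix.charpoly (Matrix.of ![![0,1,0,0],![0,0,1,0],![0,0,0,1],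
    ![-(μ₁*μ₂)^2, 2*(μ₁+μ₂)*(μ₁*μ₂), -((μ₁+μ₂)^2 + 2*(μ₁*μ₂)), 2*(μ₁+μ₂)]]) = _
  rw [Matrix.charpoly]
  simp [Matrix.det_succ_row_zero, Fin.sum_univ_succ, Matrix.charmatrix_apply, Matrix.diagonal,
    Fin.succAbove]
  ring_nf
  simp [map_mul, map_add, map_pow, map_sub, map_neg, map_ofNat]
  ring

private theorem companion_eigen (μ₁ μ₂ : ℝ) :
    Matrix.mulVec (![![0,1,0,0],![0,0,1,0],![0,0,0,1],
      ![-(μ₁*μ₂)^2, 2*(μ₁+μ₂)*(μ₁*μ₂), -((μ₁+μ₂)^2 + 2*(μ₁*μ₂)), 2*(μ₁+μ₂)]] :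
      Matrix (Fin 4) (Fin 4) ℝ) ![1, μ₁, μ₁^2, μ₁^3] = μ₁ • ![1, μ₁, μ₁^2, μ₁^3] := by
  funext i
  fin_cases i <;>
    simp [Matrix.mulVec, dotProduct, Fin.sum_univ_four] <;> ring

private theorem companion_eigen' (μ₁ μ₂ : ℝ) :
    Matrix.mulVec (![![0,1,0,0],![0,0,1,0],![0,0,0,1],
      ![-(μ₁*μ₂)^2, 2*(μ₁+μ₂)*(μ₁*μ₂), -((μ₁+μ₂)^2 + 2*(μ₁*μ₂)), 2*(μ₁+μ₂)]] :
      Matrix (Fin 4) (Fin 4) ℝ) ![1, μ₂, μ₂^2, μ₂^3] = μ₂ • ![1, μ₂, μ₂^2, μ₂^3] := by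
  funext i
  fin_cases i <;>
    simp [Matrix.mulVec, dotProduct, Fin.sum_univ_four] <;> ring

/-- weak hyperbolicity of the bi-delta system: the flux Jacobian has
characteristic polynomial `(X-μ₁)²(X-μ₂)²` with `μ₁ ≠ μ₂`, and `(1, μᵢ, μᵢ², μᵢ³)` is a
right eigenvector for `μᵢ`. -/
theorem stmt_4 (ρ u p q : ℝ) (hρ : 0 < ρ) (hp : 0 < p)
    (μ₁ μ₂ : ℝ)
    (hμ₁ : μ₁ = u + q/(2*p) - Real.sqrt (p/ρ + (q/(2*p))^2))
    (hμ₂ : μ₂ = u + q/(2*p) + Real.sqrt (p/ρ + (q/(2*p))^2))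
    (U₀ : Fin 4 → ℝ)
    (hU₀ : U₀ = ![ρ, ρ*u, ρ*u^2 + p, ρ*u^3 + 3*p*u + q])
    (J : Matrix (Fin 4) (Fin 4) ℝ)
    (hJ : ∀ i j, J i j = fderiv ℝ (fun V => biDeltaFlux V i) U₀ (Pi.single j 1)) :
    μ₁ ≠ μ₂ ∧
    J.charpoly = (X - C μ₁)^2 * (X - C μ₂)^2 ∧
    J.mulVec ![1, μ₁, μ₁^2, μ₁^3] = μ₁ • ![1, μ₁, μ₁^2, μ₁^3] ∧
    J.mulVec ![1, μ₂, μ₂^2, μ₂^3] = μ₂ • ![1, μ₂, μ₂^2, μ₂^3] := by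
  have hρ' : ρ ≠ 0 := hρ.ne'
  have hp' : p ≠ 0 := hp.ne'
  have harg : (0:ℝ) < p/ρ + (q/(2*p))^2 := by positivity
  have hr2 : Real.sqrt (p/ρ + (q/(2*p))^2) ^ 2 = p/ρ + (q/(2*p))^2 := Real.sq_sqrt harg.le
  have hrpos : 0 < Real.sqrt (p/ρ + (q/(2*p))^2) := Real.sqrt_pos.2 harg
  have hne : μ₁ ≠ μ₂ := by rw [hμ₁, hμ₂]; intro h; linarith
  have he1 : μ₁ + μ₂ = 2*u + q/p := by rw [hμ₁, hμ₂]; field_simp; ring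
  have he2 : μ₁ * μ₂ = u^2 + u*q/p - p/ρ := by
    have hexp : μ₁ * μ₂ = (u + q/(2*p))^2 - Real.sqrt (p/ρ + (q/(2*p))^2) ^ 2 := by
      rw [hμ₁, hμ₂]; ring
    rw [hexp, hr2]; field_simp; ring
  -- nonvanishing of the denominators at `U₀`
  have h0' : U₀ 0 ≠ 0 := by rw [hU₀]; simpa using hρ'
  have hcancel : ρ * u / ρ = u := mul_div_cancel_left₀ u hρ'
  have hPval : U₀ 2 - U₀ 0 * (U₀ 1 / U₀ 0)^2 = p := by rw [hU₀]; simp [hcancel]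
  have hP' : U₀ 2 - U₀ 0 * (U₀ 1 / U₀ 0)^2 ≠ 0 := by rw [hPval]; exact hp'
  -- differentiability of the fourth component
  have hGeq : (fun V => biDeltaFlux V 3) = (fun V : Fin 4 → ℝ =>
      V 0 * (V 1 / V 0)^4 + 6*(V 2 - V 0 * (V 1 / V 0)^2)*(V 1 / V 0)^2
      + 4*(V 1 / V 0)*(V 3 - V 0 * (V 1 / V 0)^3 - 3*(V 2 - V 0 * (V 1 / V 0)^2)*(V 1 / V 0))
      + (V 3 - V 0 * (V 1 / V 0)^3 - 3*(V 2 - V 0 * (V 1 / V 0)^2)*(V 1 / V 0))^2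
          / (V 2 - V 0 * (V 1 / V 0)^2)
      + (V 2 - V 0 * (V 1 / V 0)^2)^2 / V 0) := by
    funext V; simp [biDeltaFlux]
  have hdiff : DifferentiableAt ℝ (fun V => biDeltaFlux V 3) U₀ := by
    rw [hGeq]
    have d0 : DifferentiableAt ℝ (fun V : Fin 4 → ℝ => V 0) U₀ :=
      (ContinuousLinearMap.proj 0 : (Fin 4 → ℝ) →L[ℝ] ℝ).differentiable.differentiableAt
    have d1 : DifferentiableAt ℝ (fun V : Fin 4 → ℝ => V 1) U₀ :=
      (ContinuousLinearMap.proj 1 : (Fin 4 → ℝ) →L[ℝ] ℝ).differentiable.differentiableAt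
    have d2 : DifferentiableAt ℝ (fun V : Fin 4 → ℝ => V 2) U₀ :=
      (ContinuousLinearMap.proj 2 : (Fin 4 → ℝ) →L[ℝ] ℝ).differentiable.differentiableAt
    have d3 : DifferentiableAt ℝ (fun V : Fin 4 → ℝ => V 3) U₀ :=
      (ContinuousLinearMap.proj 3 : (Fin 4 → ℝ) →L[ℝ] ℝ).differentiable.differentiableAt
    have du : DifferentiableAt ℝ (fun V : Fin 4 → ℝ => V 1 / V 0) U₀ := by
      simp only [div_eq_mul_inv]; exact d1.mul (d0.inv h0')
    have dP : DifferentiableAt ℝ (fun V : Fin 4 → ℝ => V 2 - V 0 * (V 1 / V 0)^2) U₀ :=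
      d2.sub (d0.mul (du.pow 2))
    have dQ : DifferentiableAt ℝ (fun V : Fin 4 → ℝ =>
        V 3 - V 0 * (V 1 / V 0)^3 - 3*(V 2 - V 0 * (V 1 / V 0)^2)*(V 1 / V 0)) U₀ :=
      (d3.sub (d0.mul (du.pow 3))).sub ((dP.const_mul 3).mul du)
    simp only [div_eq_mul_inv] at dP dQ ⊢
    exact ((((d0.mul (du.pow 4)).add ((dP.const_mul 6).mul (du.pow 2))).add
      ((du.const_mul 4).mul dQ)).add ((dQ.pow 2).mul
        (dP.inv (by simpa [div_eq_mul_inv] using hP')))).add ((dP.pow 2).mul (d0.inv h0'))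
  have hbridge : ∀ j : Fin 4,
      HasDerivAt (fun t : ℝ => biDeltaFlux (U₀ + t • (Pi.single j 1 : Fin 4 → ℝ)) 3)
        (fderiv ℝ (fun V => biDeltaFlux V 3) U₀ (Pi.single j 1)) 0 := by
    intro j
    have hline : HasDerivAt (fun t : ℝ => U₀ + t • (Pi.single j 1 : Fin 4 → ℝ))
        (Pi.single j 1) 0 := by
      simpa using ((hasDerivAt_id (0:ℝ)).smul_const (Pi.single j 1 : Fin 4 → ℝ)).const_add U₀
    have := hdiff.hasFDerivAt.comp_hasDerivAt_of_eq 0 hline (by simp)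
    exact this
  have hEq0 : (fun t : ℝ => biDeltaFlux (U₀ + t • (Pi.single (0:Fin 4) 1 : Fin 4 → ℝ)) 3) =
      (fun s : ℝ => (ρ + s) * ((ρ*u) / (ρ + s))^4 + 6*((ρ*u^2 + p) - (ρ + s) * ((ρ*u) / (ρ + s))^2)*((ρ*u) / (ρ + s))^2 + 4*((ρ*u) / (ρ + s))*((ρ*u^3 + 3*p*u + q) - (ρ + s)*((ρ*u) / (ρ + s))^3 - 3*((ρ*u^2 + p) - (ρ + s) * ((ρ*u) / (ρ + s))^2)*((ρ*u) / (ρ + s))) + ((ρ*u^3 + 3*p*u + q) - (ρ + s)*((ρ*u) / (ρ + s))^3 - 3*((ρ*u^2 + p) - (ρ + s) * ((ρ*u) / (ρ + s))^2)*((ρ*u) / (ρ + s)))^2 / ((ρ*u^2 + p) - (ρ + s) * ((ρ*u) / (ρ + s))^2) + ((ρ*u^2 + p) - (ρ + s) * ((ρ*u) / (ρ + s))^2)^2 / (ρ + s)) := by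
    funext t
    simp [biDeltaFlux, hU₀, Pi.single_apply]
  have key0 : fderiv ℝ (fun V => biDeltaFlux V 3) U₀ (Pi.single (0:Fin 4) 1) = -(μ₁*μ₂)^2 := by
    have hb := hbridge 0
    rw [hEq0] at hb
    have hk := keyDeriv ρ u p q hρ' hp' (fun s => ρ + s) (fun _ => ρ*u) (fun _ => ρ*u^2 + p) (fun _ => ρ*u^3 + 3*p*u + q)
      1 0 0 0 0 ((hasDerivAt_id 0).const_add (ρ)) (hasDerivAt_const _ _) (hasDerivAt_const _ _) (hasDerivAt_const _ _)
      (by norm_num) rfl rfl rfl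
    have hval := hk.unique hb
    simp only [he1, he2]; rw [← hval]; ring
  have hEq1 : (fun t : ℝ => biDeltaFlux (U₀ + t • (Pi.single (1:Fin 4) 1 : Fin 4 → ℝ)) 3) =
      (fun s : ℝ => (ρ) * ((ρ*u + s) / (ρ))^4 + 6*((ρ*u^2 + p) - (ρ) * ((ρ*u + s) / (ρ))^2)*((ρ*u + s) / (ρ))^2 + 4*((ρ*u + s) / (ρ))*((ρ*u^3 + 3*p*u + q) - (ρ)*((ρ*u + s) / (ρ))^3 - 3*((ρ*u^2 + p) - (ρ) * ((ρ*u + s) / (ρ))^2)*((ρ*u + s) / (ρ))) + ((ρ*u^3 + 3*p*u + q) - (ρ)*((ρ*u + s) / (ρ))^3 - 3*((ρ*u^2 + p) - (ρ) * ((ρ*u + s) / (ρ))^2)*((ρ*u + s) / (ρ)))^2 / ((ρ*u^2 + p) - (ρ) * ((ρ*u + s) / (ρ))^2) + ((ρ*u^2 + p) - (ρ) * ((ρ*u + s) / (ρ))^2)^2 / (ρ)) := by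
    funext t
    simp [biDeltaFlux, hU₀, Pi.single_apply]
  have key1 : fderiv ℝ (fun V => biDeltaFlux V 3) U₀ (Pi.single (1:Fin 4) 1) = 2*(μ₁+μ₂)*(μ₁*μ₂) := by
    have hb := hbridge 1
    rw [hEq1] at hb
    have hk := keyDeriv ρ u p q hρ' hp' (fun _ => ρ) (fun s => ρ*u + s) (fun _ => ρ*u^2 + p) (fun _ => ρ*u^3 + 3*p*u + q)
      0 1 0 0 0 (hasDerivAt_const _ _) ((hasDerivAt_id 0).const_add (ρ*u)) (hasDerivAt_const _ _) (hasDerivAt_const _ _)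
      rfl (by norm_num) rfl rfl
    have hval := hk.unique hb
    simp only [he1, he2]; rw [← hval]; ring
  have hEq2 : (fun t : ℝ => biDeltaFlux (U₀ + t • (Pi.single (2:Fin 4) 1 : Fin 4 → ℝ)) 3) =
      (fun s : ℝ => (ρ) * ((ρ*u) / (ρ))^4 + 6*((ρ*u^2 + p + s) - (ρ) * ((ρ*u) / (ρ))^2)*((ρ*u) / (ρ))^2 + 4*((ρ*u) / (ρ))*((ρ*u^3 + 3*p*u + q) - (ρ)*((ρ*u) / (ρ))^3 - 3*((ρ*u^2 + p + s) - (ρ) * ((ρ*u) / (ρ))^2)*((ρ*u) / (ρ))) + ((ρ*u^3 + 3*p*u + q) - (ρ)*((ρ*u) / (ρ))^3 - 3*((ρ*u^2 + p + s) - (ρ) * ((ρ*u) / (ρ))^2)*((ρ*u) / (ρ)))^2 / ((ρ*u^2 + p + s) - (ρ) * ((ρ*u) / (ρ))^2) + ((ρ*u^2 + p + s) - (ρ) * ((ρ*u) / (ρ))^2)^2 / (ρ)) := by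
    funext t
    simp [biDeltaFlux, hU₀, Pi.single_apply]
  have key2 : fderiv ℝ (fun V => biDeltaFlux V 3) U₀ (Pi.single (2:Fin 4) 1) = -((μ₁+μ₂)^2 + 2*(μ₁*μ₂)) := by
    have hb := hbridge 2
    rw [hEq2] at hb
    have hk := keyDeriv ρ u p q hρ' hp' (fun _ => ρ) (fun _ => ρ*u) (fun s => ρ*u^2 + p + s) (fun _ => ρ*u^3 + 3*p*u + q)
      0 0 1 0 0 (hasDerivAt_const _ _) (hasDerivAt_const _ _) ((hasDerivAt_id 0).const_add (ρ*u^2 + p)) (hasDerivAt_const _ _)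
      rfl rfl (by norm_num) rfl
    have hval := hk.unique hb
    simp only [he1, he2]; rw [← hval]; ring
  have hEq3 : (fun t : ℝ => biDeltaFlux (U₀ + t • (Pi.single (3:Fin 4) 1 : Fin 4 → ℝ)) 3) =
      (fun s : ℝ => (ρ) * ((ρ*u) / (ρ))^4 + 6*((ρ*u^2 + p) - (ρ) * ((ρ*u) / (ρ))^2)*((ρ*u) / (ρ))^2 + 4*((ρ*u) / (ρ))*((ρ*u^3 + 3*p*u + q + s) - (ρ)*((ρ*u) / (ρ))^3 - 3*((ρ*u^2 + p) - (ρ) * ((ρ*u) / (ρ))^2)*((ρ*u) / (ρ))) + ((ρ*u^3 + 3*p*u + q + s) - (ρ)*((ρ*u) / (ρ))^3 - 3*((ρ*u^2 + p) - (ρ) * ((ρ*u) / (ρ))^2)*((ρ*u) / (ρ)))^2 / ((ρ*u^2 + p) - (ρ) * ((ρ*u) / (ρ))^2) + ((ρ*u^2 + p) - (ρ) * ((ρ*u) / (ρ))^2)^2 / (ρ)) := by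
    funext t
    simp [biDeltaFlux, hU₀, Pi.single_apply]
  have key3 : fderiv ℝ (fun V => biDeltaFlux V 3) U₀ (Pi.single (3:Fin 4) 1) = 2*(μ₁+μ₂) := by
    have hb := hbridge 3
    rw [hEq3] at hb
    have hk := keyDeriv ρ u p q hρ' hp' (fun _ => ρ) (fun _ => ρ*u) (fun _ => ρ*u^2 + p) (fun s => ρ*u^3 + 3*p*u + q + s)
      0 0 0 1 0 (hasDerivAt_const _ _) (hasDerivAt_const _ _) (hasDerivAt_const _ _) ((hasDerivAt_id 0).const_add (ρ*u^3 + 3*p*u + q))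
      rfl rfl rfl (by norm_num)
    have hval := hk.unique hb
    simp only [he1, he2]; rw [← hval]; ring
  -- the linear rows
  have hlin : ∀ k : Fin 4, fderiv ℝ (fun V : Fin 4 → ℝ => V k) U₀
      = (ContinuousLinearMap.proj k : (Fin 4 → ℝ) →L[ℝ] ℝ) := fun k =>
    ((ContinuousLinearMap.proj k : (Fin 4 → ℝ) →L[ℝ] ℝ).hasFDerivAt).fderiv
  have hJmat : J = ![![0,1,0,0],![0,0,1,0],![0,0,0,1],
      ![-(μ₁*μ₂)^2, 2*(μ₁+μ₂)*(μ₁*μ₂), -((μ₁+μ₂)^2 + 2*(μ₁*μ₂)), 2*(μ₁+μ₂)]] := by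
    have hc0 : (fun V => biDeltaFlux V 0) = (fun V : Fin 4 → ℝ => V 1) := by
      funext V; simp [biDeltaFlux]
    have hc1 : (fun V => biDeltaFlux V 1) = (fun V : Fin 4 → ℝ => V 2) := by
      funext V; simp [biDeltaFlux]
    have hc2 : (fun V => biDeltaFlux V 2) = (fun V : Fin 4 → ℝ => V 3) := by
      funext V; simp [biDeltaFlux]
    ext i j
    fin_cases i <;> fin_cases j <;>
      simp only [Fin.zero_eta, Fin.mk_one, Fin.reduceFinMk, Fin.isValue, hJ, hc0, hc1, hc2,
        hlin, key0, key1, key2, key3,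
        ContinuousLinearMap.proj_apply, Pi.single_apply, Fin.reduceEq, reduceIte] <;>
      first | rfl | norm_num
  refine ⟨hne, ?_, ?_, ?_⟩
  · rw [hJmat]; exact companion_charpoly μ₁ μ₂
  · rw [hJmat]; exact companion_eigen μ₁ μ₂
  · rw [hJmat]; exact companion_eigen' μ₁ μ₂
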